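/- Let (M, ∘, e) be an F-manifold and let ε be an invertible vector field on M. Then ε is an eventual identity (i.e. the multiplication X * Y := X ∘ Y ∘ ε^{-1} defines an F-manifold structure on M) if and only if L_ε(∘)(X, Y) = [e, ε] ∘ X ∘ Y for all vector fields X, Y on M, where (L_ε(∘))(X,Y) := [ε, X∘Y] − [ε,X]∘Y − X∘[ε,Y]. -/

import Mathlib

/-- An algebraic model of the geometric setting of the paper: `R` plays the role
of the ring `C^∞(M)` of smooth functions on a manifold `M`, and `V` plays the
role of the `C^∞(M)`-module of smooth vector fields on `M`, equipped with its
Lie bracket and with the action of vector fields on functions by derivations. -/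
structure SmoothSetting (R V : Type*) [CommRing R] [LieRing V] [Module R V] where
  /-- the action `X(f)` of a vector field `X` on a function `f` -/
  deriv : V → R → R
  deriv_add : ∀ (X : V) (f g : R), deriv X (f + g) = deriv X f + deriv X g
  deriv_mul : ∀ (X : V) (f g : R), deriv X (f * g) = deriv X f * g + f * deriv X g
  add_deriv : ∀ (X Y : V) (f : R), deriv (X + Y) f = deriv X f + deriv Y f
  smul_deriv : ∀ (f : R) (X : V) (g : R), deriv (f • X) g = f * deriv X g
  bracket_deriv : ∀ (X Y : V) (f : R),
    deriv ⁅X, Y⁆ f = deriv X (deriv Y f) - deriv Y (deriv X f)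
  bracket_smul : ∀ (X : V) (f : R) (Y : V), ⁅X, f • Y⁆ = f • ⁅X, Y⁆ + deriv X f • Y

/-- `(m, e)` is an F-manifold structure: `m` is a fiber-preserving (i.e.
`C^∞(M)`-bilinear) commutative associative multiplication on vector fields with
unit field `e`, satisfying the Hertling–Manin integrability condition
`L_{X∘Y}(∘) = X ∘ L_Y(∘) + Y ∘ L_X(∘)`. -/
structure IsFManifold (R : Type*) {V : Type*} [CommRing R] [LieRing V] [Module R V]
    (m : V → V → V) (e : V) : Prop where
  add_left : ∀ X Y Z : V, m (X + Y) Z = m X Z + m Y Z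
  smul_left : ∀ (f : R) (X Y : V), m (f • X) Y = f • m X Y
  comm : ∀ X Y : V, m X Y = m Y X
  assoc : ∀ X Y Z : V, m (m X Y) Z = m X (m Y Z)
  unit : ∀ X : V, m e X = X
  hertling_manin : ∀ X Y Z W : V,
    ⁅m X Y, m Z W⁆ - m ⁅m X Y, Z⁆ W - m Z ⁅m X Y, W⁆ =
      m X (⁅Y, m Z W⁆ - m ⁅Y, Z⁆ W - m Z ⁅Y, W⁆)
        + m Y (⁅X, m Z W⁆ - m ⁅X, Z⁆ W - m Z ⁅X, W⁆)

/-- The dual multiplication `X * Y := X ∘ Y ∘ ε⁻¹` determined by an invertible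
vector field `ε` with inverse `εinv`. -/
def dualMul {V : Type*} (m : V → V → V) (εinv : V) : V → V → V :=
  fun X Y => m (m X Y) εinv

/-- `ε` (with inverse `εinv`) is an eventual identity on the F-manifold `(m, e)`:
it is invertible and the dual multiplication `X * Y = X ∘ Y ∘ ε⁻¹` defines an
F-manifold structure on `M` with unit field `ε`. -/
def IsEventualIdentity (R : Type*) {V : Type*} [CommRing R] [LieRing V] [Module R V]
    (m : V → V → V) (e ε εinv : V) : Prop :=
  m ε εinv = e ∧ IsFManifold R (dualMul m εinv) ε

/-- `nabla` is a (Koszul) connection on the tangent bundle, i.e. on vector fields. -/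
structure IsConnection {R V : Type*} [CommRing R] [LieRing V] [Module R V]
    (S : SmoothSetting R V) (nabla : V → V → V) : Prop where
  add_left : ∀ X Y Z : V, nabla (X + Y) Z = nabla X Z + nabla Y Z
  smul_left : ∀ (f : R) (X Y : V), nabla (f • X) Y = f • nabla X Y
  add_right : ∀ X Y Z : V, nabla X (Y + Z) = nabla X Y + nabla X Z
  leibniz : ∀ (X : V) (f : R) (Y : V), nabla X (f • Y) = S.deriv X f • Y + f • nabla X Y

/-- `nabla` is torsion-free. -/
def IsTorsionFree {V : Type*} [LieRing V] (nabla : V → V → V) : Prop :=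
  ∀ X Y, nabla X Y - nabla Y X = ⁅X, Y⁆

/-- The covariant derivative `∇_X(∘)(Y, Z)` of a multiplication `m` with respect
to a connection `nabla`. -/
def covMul {V : Type*} [LieRing V] (nabla m : V → V → V) (X Y Z : V) : V :=
  nabla X (m Y Z) - m (nabla X Y) Z - m Y (nabla X Z)

/-- `nabla` is compatible with the multiplication `m`: the vector valued tensor
`∇(∘)` is totally symmetric. -/
def IsCompatible {V : Type*} [LieRing V] (nabla m : V → V → V) : Prop :=
  ∀ X Y Z, covMul nabla m X Y Z = covMul nabla m Y X Z ∧
    covMul nabla m X Y Z = covMul nabla m X Z Y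

/-- The curvature `R^∇_{X,Y}Z = ∇_X∇_Y Z − ∇_Y∇_X Z − ∇_{[X,Y]}Z`. -/
def curv {V : Type*} [LieRing V] (nabla : V → V → V) (X Y Z : V) : V :=
  nabla X (nabla Y Z) - nabla Y (nabla X Z) - nabla ⁅X, Y⁆ Z

/-- `nabla` is flat. -/
def IsFlat {V : Type*} [LieRing V] (nabla : V → V → V) : Prop :=
  ∀ X Y Z, curv nabla X Y Z = 0

/-- The curvature condition
`V∘R_{Z,Y}X + Y∘R_{V,Z}X + Z∘R_{Y,V}X = 0` of Lorenzoni–Pedroni. -/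
def CurvCircCond {V : Type*} [LieRing V] (m nabla : V → V → V) : Prop :=
  ∀ X Y Z W, m W (curv nabla Z Y X) + m Y (curv nabla W Z X)
    + m Z (curv nabla Y W X) = 0

/-- A special family of connections on the F-manifold `(m, e)`: the family of
all `∇̃^V_X(Y) = ∇̃_X(Y) + V∘X∘Y`, `V` a vector field, where `∇̃` is some
torsion-free connection compatible with `m`. -/
def IsSpecialFamily {R V : Type*} [CommRing R] [LieRing V] [Module R V]
    (S : SmoothSetting R V) (m : V → V → V) (SF : Set (V → V → V)) : Prop :=
  ∃ nt : V → V → V, IsConnection S nt ∧ IsTorsionFree nt ∧ IsCompatible nt m ∧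
    SF = { n | ∃ W : V, n = fun X Y => nt X Y + m (m W X) Y }

/-- The connection `∇^W_X(Y) = ε∘∇̃_X(ε⁻¹∘Y) − ∇̃_{ε⁻¹∘Y}(ε)∘X + W*X*Y` on the
dual F-manifold, where `*` is the dual multiplication. -/
def dualConn {V : Type*} [LieRing V] (m : V → V → V) (ε εinv : V)
    (nt : V → V → V) (W : V) : V → V → V :=
  fun X Y => m ε (nt X (m εinv Y)) - m (nt (m εinv Y) ε) X
    + dualMul m εinv (dualMul m εinv W X) Y

/-- The dual family `D_ε(S̃)` built from a chosen connection `nt ∈ S̃`. -/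
def dualFamily {V : Type*} [LieRing V] (m : V → V → V) (ε εinv : V)
    (nt : V → V → V) : Set (V → V → V) :=
  { n | ∃ W : V, n = dualConn m ε εinv nt W }

/-- The dual family `D_ε(S̃)` of a family of connections `S̃`. -/
def dualFamilyOfSet {V : Type*} [LieRing V] (m : V → V → V) (ε εinv : V)
    (SF : Set (V → V → V)) : Set (V → V → V) :=
  { n | ∃ nt ∈ SF, ∃ W : V, n = dualConn m ε εinv nt W }

/-- The second structure connection
`∇^F_X(Y) = ε∘∇̃_X(ε⁻¹∘Y) − ∇̃_{ε⁻¹∘Y}(ε)∘X` of `(M, ∘, e, ε, ∇̃)`. -/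
def secondConn {V : Type*} [LieRing V] (m : V → V → V) (ε εinv : V)
    (nt : V → V → V) : V → V → V :=
  fun X Y => m ε (nt X (m εinv Y)) - m (nt (m εinv Y) ε) X

/-- The connection
`∇_X(Y) = ε∘∇̃_X(ε⁻¹∘Y) − ∇̃_{ε⁻¹∘Y}(ε)∘X + (1/2)[ε⁻¹,ε]∘X∘Y + U*X*Y`. -/
def uDualConn {V : Type*} [LieRing V] [Module ℚ V] (m : V → V → V)
    (ε εinv U : V) (nt : V → V → V) : V → V → V :=
  fun X Y => secondConn m ε εinv nt X Y + (2 : ℚ)⁻¹ • m (m ⁅εinv, ε⁆ X) Y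
    + dualMul m εinv (dualMul m εinv U X) Y

/-- The `k`-th power `X^k` of a vector field with respect to the multiplication
`m` with unit `e`. -/
def mpow {V : Type*} (m : V → V → V) (e X : V) : ℕ → V
  | 0 => e
  | k + 1 => m X (mpow m e X k)

/-- The Legendre transformation `L_u(S̃) = { u⁻¹∘∇̃_X(u∘Y) : ∇̃ ∈ S̃ }` of a
family of connections `S̃` by an invertible vector field `u` (with inverse
`uinv`). -/
def legFamily {V : Type*} (m : V → V → V) (uinv u : V)
    (SF : Set (V → V → V)) : Set (V → V → V) :=
  { n | ∃ nt ∈ SF, n = fun X Y => m uinv (nt X (m u Y)) }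


/-- Auxiliary: the Lie derivative `L_Z(∘)(A,B)` of the multiplication `m`. -/
def LieD {V : Type*} [LieRing V] (m : V → V → V) (Z A B : V) : V :=
  ⁅Z, m A B⁆ - m ⁅Z, A⁆ B - m A ⁅Z, B⁆

/-- Let `(M, ∘, e)` be an F-manifold and `ε` an invertible
vector field (with inverse `εinv`). Then `ε` is an eventual identity, i.e.
`X * Y := X ∘ Y ∘ ε⁻¹` defines an F-manifold structure on `M` (with unit `ε`),
if and only if `L_ε(∘)(X, Y) = [e, ε] ∘ X ∘ Y` for all vector fields `X, Y`. -/
theorem statement0 {R V : Type*} [CommRing R] [LieRing V] [Module R V]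
    (S : SmoothSetting R V) (m : V → V → V) (e : V)
    (hF : IsFManifold R m e) (ε εinv : V) (hinv : m ε εinv = e) :
    IsFManifold R (dualMul m εinv) ε ↔
      ∀ X Y : V, ⁅ε, m X Y⁆ - m ⁅ε, X⁆ Y - m X ⁅ε, Y⁆ = m (m ⁅e, ε⁆ X) Y := by
  have hzero : ∀ X : V, m 0 X = 0 := by
    intro X
    have h := hF.add_left 0 0 X
    rw [add_zero] at h
    exact (right_eq_add.mp h)
  letI : CommRing V :=
    { (inferInstance : AddCommGroup V) with
      mul := m
      one := e
      mul_assoc := hF.assoc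
      one_mul := hF.unit
      mul_one := fun X => (hF.comm X e).trans (hF.unit X)
      mul_comm := hF.comm
      left_distrib := fun a b c => by
        show m a (b + c) = m a b + m a c
        rw [hF.comm a (b + c), hF.add_left, hF.comm b a, hF.comm c a]
      right_distrib := fun a b c => hF.add_left a b c
      zero_mul := hzero
      mul_zero := fun a => (hF.comm a 0).trans (hzero a) }
  have hm : ∀ a b : V, m a b = a * b := fun _ _ => rfl
  have he : e = (1 : V) := rfl
  set g : V := εinv with hgdef
  have hinv' : ε * g = 1 := hinv
  set q : V → V → V → V := LieD m with hqdef
  have hq_expand : ∀ Z A B : V, ⁅Z, A * B⁆ = q Z A B + ⁅Z, A⁆ * B + A * ⁅Z, B⁆ := by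
    intro Z A B
    simp only [hqdef, LieD, hm]
    abel
  have hq_expand' : ∀ Z A B : V, ⁅A * B, Z⁆ = -q Z A B - ⁅Z, A⁆ * B - A * ⁅Z, B⁆ := by
    intro Z A B
    rw [← lie_skew, hq_expand]
    abel
  have hHM : ∀ A B C D : V, q (A * B) C D = A * q B C D + B * q A C D := by
    intro A B C D
    simpa only [hqdef, LieD, hm] using hF.hertling_manin A B C D
  have hqe : ∀ C D : V, q (1 : V) C D = 0 := by
    intro C D
    have h := hHM 1 1 C D
    rw [one_mul] at h
    linear_combination -h
  have hqg : ∀ C D : V, q g C D = -((g * g) * q ε C D) := by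
    intro C D
    have h := hHM ε g C D
    rw [hinv', hqe] at h
    linear_combination (-g) * h - (q g C D) * hinv'
  have key : ∀ X Y Z W : V,
      ⁅(X*Y)*g, (Z*W)*g⁆ - (⁅(X*Y)*g, Z⁆ * W) * g - (Z * ⁅(X*Y)*g, W⁆) * g
        - (X * (⁅Y, (Z*W)*g⁆ - (⁅Y, Z⁆ * W) * g - (Z * ⁅Y, W⁆) * g)) * g
        - (Y * (⁅X, (Z*W)*g⁆ - (⁅X, Z⁆ * W) * g - (Z * ⁅X, W⁆) * g)) * g
      = -((g*g) * (g * ((X*Y) * q ε Z W) + (X*Y) * q ε (Z*W) g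
          - (Z*W) * q ε (X*Y) g - g * ((Z*W) * q ε X Y))) := by
    intro X Y Z W
    rw [hq_expand ((X*Y)*g) (Z*W) g, hq_expand ((X*Y)*g) Z W,
        hq_expand' g (X*Y) g, hq_expand g X Y,
        hq_expand Y (Z*W) g, hq_expand Y Z W,
        hq_expand X (Z*W) g, hq_expand X Z W,
        hHM (X*Y) g (Z*W) g, hHM X Y (Z*W) g,
        hHM (X*Y) g Z W, hHM X Y Z W,
        hqg (Z*W) g, hqg Z W, hqg (X*Y) g, hqg X Y,
        lie_self, ← lie_skew g X, ← lie_skew g Y]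
    ring
  have hcan : ∀ v : V, g * v = 0 → v = 0 := by
    intro v hv
    calc v = ε * (g * v) - (ε * g - 1) * v := by ring
      _ = 0 := by rw [hv, hinv']; ring
  have hcan2 : ∀ v : V, (g * g) * v = 0 → v = 0 := by
    intro v hv
    exact hcan v (hcan (g * v) (by linear_combination hv))
  have hq1 : ∀ A : V, q ε A 1 = ⁅(1 : V), ε⁆ * A := by
    intro A
    have h := hq_expand ε A 1
    rw [mul_one, mul_one] at h
    linear_combination -h + A * lie_skew (1 : V) ε
  have hc0 : q ε (1 : V) 1 = ⁅(1 : V), ε⁆ := by linear_combination hq1 1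
  have hc2 : q ε (1 : V) g = ⁅(1 : V), ε⁆ * g := by
    have h := hq_expand ε 1 g
    rw [one_mul, one_mul] at h
    linear_combination -h + g * lie_skew (1 : V) ε
  constructor
  · intro h
    have main : ∀ A B : V, q ε (A * B) g + g * q ε A B =
        2 * ⁅(1 : V), ε⁆ * (g * (A * B)) := by
      intro A B
      have hh := h.hertling_manin A B e e
      simp only [dualMul, hm, he, one_mul, mul_one] at hh
      have k := key A B 1 1
      simp only [one_mul, mul_one] at k
      have h0 := hcan2 (g * ((A * B) * q ε 1 1) + (A * B) * q ε 1 g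
          - q ε (A * B) g - g * q ε A B)
        (by linear_combination k - hh)
      linear_combination -h0 + (g * (A * B)) * hc0 + (A * B) * hc2
    have hXg : ∀ A : V, q ε A g = ⁅(1 : V), ε⁆ * (g * A) := by
      intro A
      have h1 := main A 1
      rw [mul_one] at h1
      linear_combination h1 - g * hq1 A
    intro X Y
    have h5 := hcan (q ε X Y - ⁅(1 : V), ε⁆ * (X * Y))
      (by linear_combination main X Y - hXg (X * Y))
    simp only [hm, he]
    linear_combination hq_expand ε X Y + h5
  · intro hq
    have hq' : ∀ A B : V, q ε A B = (⁅(1 : V), ε⁆ * A) * B := by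
      intro A B
      have h2 := hq A B
      simp only [hm, he] at h2
      linear_combination h2 - hq_expand ε A B
    refine ⟨?_, ?_, ?_, ?_, ?_, ?_⟩
    · intro X Y Z
      simp only [dualMul, hm]
      ring
    · intro f X Y
      simp only [dualMul]
      rw [hF.smul_left, hF.smul_left]
    · intro X Y
      simp only [dualMul, hm]
      ring
    · intro X Y Z
      simp only [dualMul, hm]
      ring
    · intro X
      simp only [dualMul, hm]
      linear_combination X * hinv'
    · intro X Y Z W
      simp only [dualMul, hm]
      linear_combination key X Y Z W + (-(g * g)) * (g * ((X * Y) * hq' Z W)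
        + (X * Y) * hq' (Z * W) g - (Z * W) * hq' (X * Y) g
        - g * ((Z * W) * hq' X Y))
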